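/- If x ∈ D, i.e., Σ_{k=1}^{∞} |x_k x_{k+1}| < ∞, then 𝔉(x) = lim_{n→∞} 𝔉(x₁, x₂, …, x_n), where 𝔉(x₁,…,x_n) denotes 𝔉 applied to the sequence (x₁,…,x_n,0,0,…). -/

import Mathlib

open scoped BigOperators

/-- Index tuples (k₁,…,k_m) with all kᵢ ≥ 1 and k_{i+1} ≥ k_i + 2. -/
def GapTuple (m : ℕ) (k : Fin m → ℕ) : Prop :=
  (∀ i, 1 ≤ k i) ∧ ∀ i j : Fin m, (i : ℕ) + 1 = (j : ℕ) → k i + 2 ≤ k j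

/-- The m-th term Σ_{k₁,…,k_m} x_{k₁}x_{k₁+1}⋯x_{k_m}x_{k_m+1} of the series defining 𝔉. -/
noncomputable def Fterm (x : ℕ → ℂ) (m : ℕ) : ℂ :=
  ∑' k : {k : Fin m → ℕ // GapTuple m k}, ∏ i, x (k.1 i) * x (k.1 i + 1)

/-- The function 𝔉, with the sequence `x` 1-indexed (`x 0` is ignored). -/
noncomputable def Ffun (x : ℕ → ℂ) : ℂ :=
  1 + ∑' m : ℕ, (-1 : ℂ) ^ (m + 1) * Fterm x (m + 1)

/-- 𝔉(t₁,…,t_n), i.e. 𝔉 applied to the sequence (t₁,…,t_n,0,0,…). -/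
noncomputable def Ffin (n : ℕ) (t : ℕ → ℂ) : ℂ :=
  Ffun fun k => if 1 ≤ k ∧ k ≤ n then t k else 0

open Filter

/-! ### Auxiliary material -/

lemma gap_lb {m : ℕ} {k : Fin m → ℕ} (hk : GapTuple m k) (i : Fin m) :
    2 * (i : ℕ) + 1 ≤ k i := by
  obtain ⟨hk1, hk2⟩ := hk
  suffices h : ∀ j : ℕ, ∀ hj : j < m, 2 * j + 1 ≤ k ⟨j, hj⟩ by
    exact h i.1 i.2
  intro j
  induction j with
  | zero => intro hj; simpa using hk1 ⟨0, hj⟩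
  | succ j ih =>
      intro hj
      have h1 : j < m := by omega
      have h2 := hk2 ⟨j, h1⟩ ⟨j + 1, hj⟩ rfl
      have h3 := ih h1
      omega

set_option maxHeartbeats 1000000 in
lemma pi_prod_summable :
    ∀ (m : ℕ) (c : Fin m → ℕ → ℝ), (∀ i n, 0 ≤ c i n) → (∀ i, Summable (c i)) →
      Summable (fun g : Fin m → ℕ => ∏ i, c i (g i)) ∧
        (∑' g : Fin m → ℕ, ∏ i, c i (g i)) = ∏ i, ∑' n, c i n := by
  intro m
  induction m with
  | zero =>
      intro c _ _
      have hs : HasSum (fun g : Fin 0 → ℕ => ∏ i, c i (g i)) 1 := by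
        have h := hasSum_single (f := fun g : Fin 0 → ℕ => ∏ i, c i (g i))
          (fun _ => 0) (fun b hb => absurd (funext fun i => i.elim0) hb)
        simpa using h
      exact ⟨hs.summable, by simpa using hs.tsum_eq⟩
  | succ m ih =>
      intro c hc hcs
      obtain ⟨ihS, ihT⟩ := ih (fun i => c i.succ) (fun i n => hc _ n) (fun i => hcs _)
      set e : (ℕ × (Fin m → ℕ)) ≃ (Fin (m + 1) → ℕ) := Fin.consEquiv (fun _ => ℕ)
        with he
      have key : ∀ p : ℕ × (Fin m → ℕ),
          (∏ i, c i (e p i)) = c 0 p.1 * ∏ i : Fin m, c i.succ (p.2 i) := by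
        intro p
        rw [Fin.prod_univ_succ]
        simp [he, Fin.consEquiv]
      have h2 : (0 : ℕ → ℝ) ≤ c 0 := fun n => hc 0 n
      have h3 : (0 : (Fin m → ℕ) → ℝ) ≤ fun g : Fin m → ℕ => ∏ i, c i.succ (g i) :=
        fun g => Finset.prod_nonneg fun i _ => hc _ _
      have hmul := Summable.mul_of_nonneg (hcs 0) ihS h2 h3
      have h1 : Summable (fun p : ℕ × (Fin m → ℕ) => ∏ i, c i (e p i)) :=
        hmul.congr fun p => (key p).symm
      have hS : Summable (fun g : Fin (m + 1) → ℕ => ∏ i, c i (g i)) :=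
        e.summable_iff.mp h1
      refine ⟨hS, ?_⟩
      have ht : (∑' g : Fin (m + 1) → ℕ, ∏ i, c i (g i))
          = ∑' p : ℕ × (Fin m → ℕ), ∏ i, c i (e p i) :=
        (e.tsum_eq _).symm
      rw [ht, tsum_congr key, Summable.tsum_prod hmul]
      calc ∑' (n : ℕ) (gg : Fin m → ℕ), c 0 n * ∏ i : Fin m, c i.succ (gg i)
          = ∑' n : ℕ, c 0 n * ∑' gg : Fin m → ℕ, ∏ i : Fin m, c i.succ (gg i) :=
            tsum_congr fun n => tsum_mul_left
        _ = (∑' n, c 0 n) * ∑' gg : Fin m → ℕ, ∏ i : Fin m, c i.succ (gg i) :=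
            tsum_mul_right
        _ = ∏ i : Fin (m + 1), ∑' n, c i n := by
            rw [ihT, Fin.prod_univ_succ]

/-- Tail sums of `‖x (k+1) * x (k+2)‖`. -/
noncomputable def tailT (x : ℕ → ℂ) (s : ℕ) : ℝ :=
  ∑' n : ℕ, ‖x (n + s + 1) * x (n + s + 2)‖

set_option maxHeartbeats 1000000 in
lemma gap_summable_bound (x : ℕ → ℂ)
    (hx : Summable fun k : ℕ => ‖x (k + 1) * x (k + 2)‖) (m : ℕ) :
    Summable (fun k : {k : Fin m → ℕ // GapTuple m k} =>
      ∏ i, ‖x (k.1 i) * x (k.1 i + 1)‖) ∧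
    (∑' k : {k : Fin m → ℕ // GapTuple m k}, ∏ i, ‖x (k.1 i) * x (k.1 i + 1)‖)
      ≤ ∏ i : Fin m, tailT x (2 * (i : ℕ)) := by
  classical
  have hcs : ∀ i : Fin m,
      Summable (fun n : ℕ => ‖x (n + 2 * (i : ℕ) + 1) * x (n + 2 * (i : ℕ) + 2)‖) :=
    fun i => (summable_nat_add_iff (f := fun j : ℕ => ‖x (j + 1) * x (j + 2)‖) (2 * (i : ℕ))).2 hx
  obtain ⟨hS, hT⟩ := pi_prod_summable m
    (fun i n => ‖x (n + 2 * (i : ℕ) + 1) * x (n + 2 * (i : ℕ) + 2)‖)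
    (fun i n => norm_nonneg _) hcs
  have hlb : ∀ (k : {k : Fin m → ℕ // GapTuple m k}) (i : Fin m),
      2 * (i : ℕ) + 1 ≤ k.1 i := fun k i => gap_lb k.2 i
  let φ : {k : Fin m → ℕ // GapTuple m k} → (Fin m → ℕ) :=
    fun k i => k.1 i - (2 * (i : ℕ) + 1)
  have hφ : ∀ k i, φ k i = k.1 i - (2 * (i : ℕ) + 1) := fun k i => rfl
  have hφinj : Function.Injective φ := by
    intro k k' h
    ext i
    have h1 := congrFun h i
    have h2 := hlb k i
    have h3 := hlb k' i
    rw [hφ, hφ] at h1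
    omega
  have hcomp : ∀ k : {k : Fin m → ℕ // GapTuple m k},
      (∏ i, ‖x (k.1 i) * x (k.1 i + 1)‖)
        = ∏ i, ‖x (φ k i + 2 * (i : ℕ) + 1) * x (φ k i + 2 * (i : ℕ) + 2)‖ := by
    intro k
    refine Finset.prod_congr rfl fun i _ => ?_
    have h2 := hlb k i
    have e1 : φ k i + 2 * (i : ℕ) + 1 = k.1 i := by rw [hφ]; omega
    have e2 : φ k i + 2 * (i : ℕ) + 2 = k.1 i + 1 := by rw [hφ]; omega
    rw [e1, e2]
  have hfib : Summable (fun k : {k : Fin m → ℕ // GapTuple m k} =>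
      ∏ i, ‖x (k.1 i) * x (k.1 i + 1)‖) :=
    (hS.comp_injective hφinj).congr fun k => (hcomp k).symm
  refine ⟨hfib, ?_⟩
  have hle := Summable.tsum_le_tsum_of_inj φ hφinj
    (fun g _ => Finset.prod_nonneg fun i _ => norm_nonneg _)
    (fun k => le_of_eq (hcomp k)) hfib hS
  exact hle.trans (le_of_eq hT)

/-- The flattened index type. -/
abbrev GIdx : Type := (m : ℕ) × {k : Fin (m + 1) → ℕ // GapTuple (m + 1) k}

noncomputable def Gterm (y : ℕ → ℂ) (p : GIdx) : ℂ :=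
  (-1 : ℂ) ^ (p.1 + 1) * ∏ i, y (p.2.1 i) * y (p.2.1 i + 1)

noncomputable def gB (x : ℕ → ℂ) (p : GIdx) : ℝ :=
  ∏ i, ‖x (p.2.1 i) * x (p.2.1 i + 1)‖

lemma tailT_prod_summable (x : ℕ → ℂ)
    (hx : Summable fun k : ℕ => ‖x (k + 1) * x (k + 2)‖) :
    Summable (fun m : ℕ => ∏ i : Fin (m + 1), tailT x (2 * (i : ℕ))) := by
  have h0 : ∀ s, 0 ≤ tailT x s := fun s => tsum_nonneg fun n => norm_nonneg _
  have htend : Tendsto (fun s : ℕ => tailT x s) atTop (nhds 0) :=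
    tendsto_sum_nat_add fun j : ℕ => ‖x (j + 1) * x (j + 2)‖
  have hev : ∀ᶠ s : ℕ in atTop, tailT x s < 1 / 2 :=
    htend.eventually_lt_const (by norm_num)
  obtain ⟨S, hS⟩ := eventually_atTop.1 hev
  apply summable_of_ratio_norm_eventually_le (r := 1 / 2) (by norm_num)
  filter_upwards [eventually_ge_atTop S] with m hm
  have hsplit : (∏ i : Fin (m + 2), tailT x (2 * (i : ℕ)))
      = (∏ i : Fin (m + 1), tailT x (2 * (i : ℕ))) * tailT x (2 * (m + 1)) := by
    rw [Fin.prod_univ_castSucc]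
    simp
  have hnn : 0 ≤ ∏ i : Fin (m + 1), tailT x (2 * (i : ℕ)) :=
    Finset.prod_nonneg fun i _ => h0 _
  have h1 : tailT x (2 * (m + 1)) ≤ 1 / 2 := (hS _ (by omega)).le
  calc ‖∏ i : Fin (m + 2), tailT x (2 * (i : ℕ))‖
      = (∏ i : Fin (m + 1), tailT x (2 * (i : ℕ))) * tailT x (2 * (m + 1)) := by
        rw [Real.norm_of_nonneg (Finset.prod_nonneg fun i _ => h0 _), hsplit]
    _ ≤ (∏ i : Fin (m + 1), tailT x (2 * (i : ℕ))) * (1 / 2) :=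
        mul_le_mul_of_nonneg_left h1 hnn
    _ = 1 / 2 * ‖∏ i : Fin (m + 1), tailT x (2 * (i : ℕ))‖ := by
        rw [Real.norm_of_nonneg hnn]; ring

lemma gB_summable (x : ℕ → ℂ)
    (hx : Summable fun k : ℕ => ‖x (k + 1) * x (k + 2)‖) :
    Summable (gB x) := by
  refine (summable_sigma_of_nonneg
    (fun p => Finset.prod_nonneg fun i _ => norm_nonneg _)).2
    ⟨fun m => (gap_summable_bound x hx (m + 1)).1, ?_⟩
  refine Summable.of_nonneg_of_le
    (fun m => tsum_nonneg fun k => Finset.prod_nonneg fun i _ => norm_nonneg _)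
    (fun m => (gap_summable_bound x hx (m + 1)).2)
    (tailT_prod_summable x hx)

lemma Gterm_norm_le (x y : ℕ → ℂ) (hy : ∀ j, ‖y j‖ ≤ ‖x j‖) (p : GIdx) :
    ‖Gterm y p‖ ≤ gB x p := by
  unfold Gterm gB
  rw [norm_mul, norm_pow, norm_neg, norm_one, one_pow, one_mul, norm_prod]
  refine Finset.prod_le_prod (fun i _ => norm_nonneg _) fun i _ => ?_
  rw [norm_mul, norm_mul]
  exact mul_le_mul (hy _) (hy _) (norm_nonneg _) (norm_nonneg _)

lemma Ffun_eq_tsum (y : ℕ → ℂ) (hsum : Summable (Gterm y)) :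
    Ffun y = 1 + ∑' p : GIdx, Gterm y p := by
  unfold Ffun
  congr 1
  rw [Summable.tsum_sigma hsum]
  refine tsum_congr fun m => ?_
  unfold Fterm
  exact tsum_mul_left.symm

/-- truncation -/
noncomputable def trunc (x : ℕ → ℂ) (n : ℕ) : ℕ → ℂ :=
  fun j => if 1 ≤ j ∧ j ≤ n then x j else 0

/-- If Σ|x_k x_{k+1}| < ∞ then 𝔉(x) = lim_{n→∞} 𝔉(x₁,…,x_n). -/
theorem Ffun_eq_lim_Ffin (x : ℕ → ℂ)
    (hx : Summable fun k : ℕ => ‖x (k + 1) * x (k + 2)‖) :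
    Filter.Tendsto (fun n : ℕ => Ffin n x) Filter.atTop (nhds (Ffun x)) := by
  have hgB := gB_summable x hx
  have htr : ∀ n j, ‖trunc x n j‖ ≤ ‖x j‖ := by
    intro n j
    by_cases h : 1 ≤ j ∧ j ≤ n <;> simp [trunc, h, norm_nonneg]
  have hsum_x : Summable (Gterm x) :=
    Summable.of_norm_bounded hgB (Gterm_norm_le x x fun j => le_rfl)
  have hsum_y : ∀ n, Summable (Gterm (trunc x n)) := fun n =>
    Summable.of_norm_bounded hgB (Gterm_norm_le x (trunc x n) (htr n))
  have hiter : (fun n : ℕ => Ffin n x)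
      = fun n => 1 + ∑' p : GIdx, Gterm (trunc x n) p := by
    funext n
    have h0 : Ffin n x = Ffun (trunc x n) := rfl
    rw [h0, Ffun_eq_tsum (trunc x n) (hsum_y n)]
  rw [hiter, Ffun_eq_tsum x hsum_x]
  refine Filter.Tendsto.const_add _ ?_
  refine tendsto_tsum_of_dominated_convergence hgB ?_
    (Filter.Eventually.of_forall fun n => Gterm_norm_le x (trunc x n) (htr n))
  rintro ⟨m, k⟩
  have hev : ∀ᶠ n : ℕ in atTop,
      Gterm (trunc x n) ⟨m, k⟩ = Gterm x ⟨m, k⟩ := by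
    filter_upwards [eventually_ge_atTop
      ((Finset.univ.sup fun i : Fin (m + 1) => k.1 i) + 1)] with n hn
    show (-1 : ℂ) ^ (m + 1) * ∏ i, trunc x n (k.1 i) * trunc x n (k.1 i + 1)
        = (-1 : ℂ) ^ (m + 1) * ∏ i, x (k.1 i) * x (k.1 i + 1)
    congr 1
    refine Finset.prod_congr rfl fun i _ => ?_
    have hub : k.1 i ≤ Finset.univ.sup fun i : Fin (m + 1) => k.1 i :=
      Finset.le_sup (Finset.mem_univ i)
    have h1 : 1 ≤ k.1 i := k.2.1 i
    have hc1 : 1 ≤ k.1 i ∧ k.1 i ≤ n := ⟨h1, by omega⟩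
    have hc2 : 1 ≤ k.1 i + 1 ∧ k.1 i + 1 ≤ n := ⟨by omega, by omega⟩
    simp [trunc, hc1.1, hc1.2, hc2.1, hc2.2]
  exact Filter.Tendsto.congr' (Filter.EventuallyEq.symm hev) tendsto_const_nhds
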